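/- Fix constants δ ∈ (0,2], a with 0 < |a| < (δ²/2)·(δ³/(δ³+64)), and suppose for each k the quantities satisfy: the leading term L_k ≥ (δ/8)/|a|^{k-1} · Π_k^{-1}, each of the 2(k−1) secondary terms is ≤ (2/δ²)^k (δ²/(2|a|))^s Π_k^{-1} for s = 0,…,k−2, and the z-term is ≤ (2/δ²)^k |z| Π_k^{-1}, where Π_k ≤ (2/δ²)^k. Then for all k with (δ²/(2|a|))^{k-1} > (32/δ³)|z|, the combination L_k − (secondary sum) − (z-term) is strictly greater than (δ³/32)(δ²/(2|a|))^{k-1} − |z|. -/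

import Mathlib

set_option maxHeartbeats 1000000 in
open Finset in
/-- Abstract growth estimate for the deck transformations: combining the lower
bound on the leading term, the bound on the `2(k-1)` secondary terms, the bound on
the `z`-term and the product bound `Π_k ≤ (2/δ²)^k`, one gets
`L_k − S_k − Z_k > (δ³/32)(δ²/(2|a|))^{k-1} − |z|` whenever
`(δ²/(2|a|))^{k-1} > (32/δ³)|z|`. -/
theorem growth_estimate (δ : ℝ) (a z : ℂ) (L S Z Pi : ℕ → ℝ)
    (hδ0 : 0 < δ) (hδ2 : δ ≤ 2)
    (ha0 : 0 < ‖a‖) (ha : ‖a‖ < (δ ^ 2 / 2) * (δ ^ 3 / (δ ^ 3 + 64)))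
    (hPi : ∀ k : ℕ, 0 < Pi k ∧ Pi k ≤ (2 / δ ^ 2) ^ k)
    (hL : ∀ k : ℕ, (δ / 8) / ‖a‖ ^ (k - 1) * (Pi k)⁻¹ ≤ L k)
    (hS : ∀ k : ℕ, S k ≤
      2 * ∑ s ∈ range (k - 1), (2 / δ ^ 2) ^ k * (δ ^ 2 / (2 * ‖a‖)) ^ s * (Pi k)⁻¹)
    (hZ : ∀ k : ℕ, Z k ≤ (2 / δ ^ 2) ^ k * ‖z‖ * (Pi k)⁻¹) :
    ∀ k : ℕ, 1 ≤ k → (32 / δ ^ 3) * ‖z‖ < (δ ^ 2 / (2 * ‖a‖)) ^ (k - 1) →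
      (δ ^ 3 / 32) * (δ ^ 2 / (2 * ‖a‖)) ^ (k - 1) - ‖z‖ < L k - S k - Z k := by
  intro k hk hkz
  obtain ⟨hPi0, hPile⟩ := hPi k
  set A : ℝ := ‖a‖ with hA
  set n : ℕ := k - 1 with hn
  have hkn : k = n + 1 := (Nat.succ_pred_eq_of_pos hk).symm
  have hδ3 : (0:ℝ) < δ ^ 3 := by positivity
  have h64 : (0:ℝ) < δ ^ 3 + 64 := by positivity
  set r : ℝ := δ ^ 2 / (2 * A) with hrdef
  have hA0 : (0:ℝ) < A := ha0
  have ha' : A * (δ ^ 3 + 64) < δ ^ 2 / 2 * δ ^ 3 := by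
    have := mul_lt_mul_of_pos_right ha h64
    calc A * (δ ^ 3 + 64) < δ ^ 2 / 2 * (δ ^ 3 / (δ ^ 3 + 64)) * (δ ^ 3 + 64) := this
      _ = δ ^ 2 / 2 * δ ^ 3 := by field_simp
  have hr1 : 1 + 64 / δ ^ 3 < r := by
    rw [hrdef, lt_div_iff₀ (by positivity)]
    have h1 : (1 + 64 / δ ^ 3) * δ ^ 3 = δ ^ 3 + 64 := by field_simp
    nlinarith [mul_pos hδ3 hA0]
  have hr0 : (0:ℝ) < r := by positivity
  have hrgt1 : (1:ℝ) < r := by nlinarith [div_pos (by norm_num : (0:ℝ) < 64) hδ3]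
  have hrn : (0:ℝ) < r ^ n := pow_pos hr0 n
  -- geometric sum bound
  have hsum : ∑ s ∈ range n, r ^ s ≤ r ^ n / (r - 1) := by
    rw [geom_sum_eq (ne_of_gt hrgt1)]
    gcongr
    · linarith
  -- bound on S
  have hPiinv : (0:ℝ) < (Pi k)⁻¹ := inv_pos.mpr hPi0
  have hc : (0:ℝ) < (2 / δ ^ 2) ^ k := by positivity
  have hSle : S k ≤ (Pi k)⁻¹ * (2 * (2 / δ ^ 2) ^ k * (r ^ n / (r - 1))) := by
    refine (hS k).trans ?_
    have heq : ∑ s ∈ range (k - 1), (2 / δ ^ 2) ^ k * r ^ s * (Pi k)⁻¹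
        = (2 / δ ^ 2) ^ k * (Pi k)⁻¹ * ∑ s ∈ range n, r ^ s := by
      rw [mul_sum]
      exact Finset.sum_congr rfl fun s _ => by ring
    rw [heq]
    have := mul_le_mul_of_nonneg_left hsum (le_of_lt (mul_pos hc hPiinv))
    nlinarith
  have hZle : Z k ≤ (Pi k)⁻¹ * ((2 / δ ^ 2) ^ k * ‖z‖) := by
    refine (hZ k).trans (le_of_eq ?_); ring
  set B : ℝ := (δ / 8) / A ^ n - 2 * (2 / δ ^ 2) ^ k * (r ^ n / (r - 1))
      - (2 / δ ^ 2) ^ k * ‖z‖ with hBdef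
  have hstep1 : (Pi k)⁻¹ * B ≤ L k - S k - Z k := by
    have hLk := hL k
    have : (Pi k)⁻¹ * B = (δ / 8) / A ^ n * (Pi k)⁻¹
        - (Pi k)⁻¹ * (2 * (2 / δ ^ 2) ^ k * (r ^ n / (r - 1)))
        - (Pi k)⁻¹ * ((2 / δ ^ 2) ^ k * ‖z‖) := by rw [hBdef]; ring
    rw [this]
    have : (δ / 8) / A ^ (k - 1) * (Pi k)⁻¹ = (δ / 8) / A ^ n * (Pi k)⁻¹ := by rw [← hn]
    linarith [hL k, hSle, hZle]
  -- explicit value of (δ²/2)^k * B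
  have hone : (δ ^ 2 / 2) ^ k * (2 / δ ^ 2) ^ k = 1 := by
    rw [← mul_pow]
    field_simp
    simp
  have hrApow : (δ ^ 2 / 2) ^ n / A ^ n = r ^ n := by
    have hre : r = (δ ^ 2 / 2) / A := by rw [hrdef]; ring
    rw [hre, div_pow, div_pow, div_pow]
  have hAn : (A:ℝ) ^ n ≠ 0 := ne_of_gt (pow_pos hA0 n)
  have e1 : (δ ^ 2 / 2) ^ k * ((δ / 8) / A ^ n) = δ ^ 3 / 16 * r ^ n := by
    rw [hkn, pow_succ, ← hrApow]
    field_simp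
    ring
  have hval : (δ ^ 2 / 2) ^ k * B
      = δ ^ 3 / 16 * r ^ n - 2 * (r ^ n / (r - 1)) - ‖z‖ := by
    calc (δ ^ 2 / 2) ^ k * B
        = (δ ^ 2 / 2) ^ k * ((δ / 8) / A ^ n)
          - (δ ^ 2 / 2) ^ k * (2 / δ ^ 2) ^ k * (2 * (r ^ n / (r - 1)))
          - (δ ^ 2 / 2) ^ k * (2 / δ ^ 2) ^ k * ‖z‖ := by rw [hBdef]; ring
      _ = δ ^ 3 / 16 * r ^ n - 1 * (2 * (r ^ n / (r - 1))) - 1 * ‖z‖ := by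
          rw [e1, hone]
      _ = δ ^ 3 / 16 * r ^ n - 2 * (r ^ n / (r - 1)) - ‖z‖ := by ring
  have hz32 : ‖z‖ < δ ^ 3 / 32 * r ^ n := by
    have : 32 / δ ^ 3 * ‖z‖ < r ^ n := hkz
    calc ‖z‖ = δ ^ 3 / 32 * (32 / δ ^ 3 * ‖z‖) := by field_simp
      _ < δ ^ 3 / 32 * r ^ n := by
          apply mul_lt_mul_of_pos_left this (by positivity)
  have hgeom : 2 * (r ^ n / (r - 1)) < δ ^ 3 / 32 * r ^ n := by
    have hr1' : (0:ℝ) < r - 1 := by linarith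
    have h1 : 64 < δ ^ 3 * r - δ ^ 3 := by
      have h4 := mul_lt_mul_of_pos_left hr1 hδ3
      have h3 : δ ^ 3 * (1 + 64 / δ ^ 3) = δ ^ 3 + 64 := by field_simp
      rw [h3] at h4
      linarith
    have hq : r ^ n / (r - 1) * (r - 1) = r ^ n :=
      div_mul_cancel₀ _ (ne_of_gt hr1')
    have hqpos : 0 < r ^ n / (r - 1) := div_pos hrn hr1'
    have key : 64 * (r ^ n / (r - 1)) < δ ^ 3 * r ^ n := by
      have h5 : 0 < (δ ^ 3 * r - δ ^ 3 - 64) * (r ^ n / (r - 1)) :=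
        mul_pos (by linarith) hqpos
      have h6 : (δ ^ 3 * r - δ ^ 3 - 64) * (r ^ n / (r - 1))
          = δ ^ 3 * (r ^ n / (r - 1) * (r - 1)) - 64 * (r ^ n / (r - 1)) := by ring
      rw [hq] at h6
      linarith
    linarith
  have hBpos : 0 < (δ ^ 2 / 2) ^ k * B := by
    rw [hval]; linarith
  have hB0 : 0 < B := by
    have hp : (0:ℝ) < (δ ^ 2 / 2) ^ k := by positivity
    rcases mul_pos_iff.mp hBpos with ⟨_, h⟩ | ⟨h, _⟩
    · exact h
    · linarith
  have hPiinvge : (δ ^ 2 / 2) ^ k ≤ (Pi k)⁻¹ := by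
    have h1 : (δ ^ 2 / 2) ^ k = ((2 / δ ^ 2) ^ k)⁻¹ := by
      rw [← inv_pow, inv_div]
    rw [h1]
    exact inv_anti₀ hPi0 hPile
  have hstep2 : (δ ^ 2 / 2) ^ k * B ≤ (Pi k)⁻¹ * B :=
    mul_le_mul_of_nonneg_right hPiinvge (le_of_lt hB0)
  have hfinal : δ ^ 3 / 32 * r ^ n - ‖z‖ < (δ ^ 2 / 2) ^ k * B := by
    rw [hval]; linarith
  calc δ ^ 3 / 32 * r ^ (k - 1) - ‖z‖ = δ ^ 3 / 32 * r ^ n - ‖z‖ := by rw [← hn]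
    _ < (δ ^ 2 / 2) ^ k * B := hfinal
    _ ≤ (Pi k)⁻¹ * B := hstep2
    _ ≤ L k - S k - Z k := hstep1
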